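/- Let f: ℝ → ℝⁿ be continuously differentiable and T-periodic with f and f' bounded, and let (s,ṡ,φ) solve the system s̈ = f''(φ) − B(ṡ − f'(φ)) − K(s − f(φ)), φ̇ = 1 + γ((s−f(φ))ᵀK f'(φ) + (ṡ−f'(φ))ᵀ f''(φ)) with B, K symmetric positive definite and γ ≥ 0. Then the function V₁(t) = ½ (s−f(φ))ᵀ K (s−f(φ)) + ½ ‖ṡ−f'(φ)‖² is nonincreasing along solutions; specifically V̇₁ = −γ((s−f(φ))ᵀK f'(φ) + (ṡ−f'(φ))ᵀf''(φ))² − (ṡ−f'(φ))ᵀ B (ṡ−f'(φ)) ≤ 0. -/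

import Mathlib

open Matrix

theorem hasDerivAt_dotp {n : ℕ} {a b : ℝ → Fin n → ℝ} {a' b' : Fin n → ℝ} {t : ℝ}
    (ha : HasDerivAt a a' t) (hb : HasDerivAt b b' t) :
    HasDerivAt (fun u => a u ⬝ᵥ b u) (a' ⬝ᵥ b t + a t ⬝ᵥ b') t := by
  simp only [dotProduct, ← Finset.sum_add_distrib]
  exact HasDerivAt.fun_sum fun i _ =>
    ((hasDerivAt_pi.1 ha i).mul (hasDerivAt_pi.1 hb i))

theorem mulVec_hasDerivAt {n : ℕ} {a : ℝ → Fin n → ℝ} {a' : Fin n → ℝ} {t : ℝ}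
    (M : Matrix (Fin n) (Fin n) ℝ) (ha : HasDerivAt a a' t) :
    HasDerivAt (fun u => M *ᵥ a u) (M *ᵥ a') t := by
  apply hasDerivAt_pi.2
  intro i
  simp only [mulVec, dotProduct]
  exact HasDerivAt.fun_sum fun j _ => (hasDerivAt_pi.1 ha j).const_mul (M i j)

theorem lyapunov_nonincreasing (n : ℕ)
    (B K : Matrix (Fin n) (Fin n) ℝ) (hB : B.PosDef) (hK : K.PosDef)
    (γ : ℝ) (hγ : 0 ≤ γ) (T : ℝ) (hT : 0 < T)
    (f f' f'' : ℝ → Fin n → ℝ)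
    (hf : ∀ x, HasDerivAt f (f' x) x) (hf' : ∀ x, HasDerivAt f' (f'' x) x)
    (hf''c : Continuous f'')
    (hper : ∀ x, f (x + T) = f x)
    (hfb : ∃ M, ∀ x, ‖f x‖ ≤ M) (hf'b : ∃ M, ∀ x, ‖f' x‖ ≤ M)
    (s s' s'' : ℝ → Fin n → ℝ) (φ φ' : ℝ → ℝ)
    (hs : ∀ t, HasDerivAt s (s' t) t) (hs' : ∀ t, HasDerivAt s' (s'' t) t)
    (hφ : ∀ t, HasDerivAt φ (φ' t) t)
    (hode1 : ∀ t, s'' t =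
      f'' (φ t) - B *ᵥ (s' t - f' (φ t)) - K *ᵥ (s t - f (φ t)))
    (hode2 : ∀ t, φ' t = 1 + γ *
      ((s t - f (φ t)) ⬝ᵥ (K *ᵥ f' (φ t)) + (s' t - f' (φ t)) ⬝ᵥ f'' (φ t))) :
    ∀ t, HasDerivAt (fun u =>
        (1 / 2) * ((s u - f (φ u)) ⬝ᵥ (K *ᵥ (s u - f (φ u)))) +
        (1 / 2) * ((s' u - f' (φ u)) ⬝ᵥ (s' u - f' (φ u))))
      (-γ * ((s t - f (φ t)) ⬝ᵥ (K *ᵥ f' (φ t)) +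
              (s' t - f' (φ t)) ⬝ᵥ f'' (φ t)) ^ 2
        - (s' t - f' (φ t)) ⬝ᵥ (B *ᵥ (s' t - f' (φ t)))) t ∧
    (-γ * ((s t - f (φ t)) ⬝ᵥ (K *ᵥ f' (φ t)) +
            (s' t - f' (φ t)) ⬝ᵥ f'' (φ t)) ^ 2
      - (s' t - f' (φ t)) ⬝ᵥ (B *ᵥ (s' t - f' (φ t)))) ≤ 0 := by
  intro t
  set e : Fin n → ℝ := s t - f (φ t) with he_def
  set d : Fin n → ℝ := s' t - f' (φ t) with hd_def
  set P : ℝ := e ⬝ᵥ (K *ᵥ f' (φ t)) + d ⬝ᵥ f'' (φ t) with hP_def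
  constructor
  · -- derivatives of e and d
    have he : HasDerivAt (fun u => s u - f (φ u)) (s' t - φ' t • f' (φ t)) t :=
      (hs t).sub ((hf (φ t)).scomp t (hφ t))
    have hd : HasDerivAt (fun u => s' u - f' (φ u)) (s'' t - φ' t • f'' (φ t)) t :=
      (hs' t).sub ((hf' (φ t)).scomp t (hφ t))
    have h1 : HasDerivAt (fun u => (1/2 : ℝ) * ((s u - f (φ u)) ⬝ᵥ (K *ᵥ (s u - f (φ u)))))
        ((1/2 : ℝ) * ((s' t - φ' t • f' (φ t)) ⬝ᵥ (K *ᵥ e)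
          + e ⬝ᵥ (K *ᵥ (s' t - φ' t • f' (φ t))))) t :=
      (hasDerivAt_dotp he (mulVec_hasDerivAt K he)).const_mul _
    have h2 : HasDerivAt (fun u => (1/2 : ℝ) * ((s' u - f' (φ u)) ⬝ᵥ (s' u - f' (φ u))))
        ((1/2 : ℝ) * ((s'' t - φ' t • f'' (φ t)) ⬝ᵥ d + d ⬝ᵥ (s'' t - φ' t • f'' (φ t)))) t :=
      (hasDerivAt_dotp hd hd).const_mul _
    refine (h1.add h2).congr_deriv ?_
    -- now algebra
    have hKT : Kᵀ = K := by
      rw [← K.conjTranspose_eq_transpose_of_trivial]; exact hK.isHermitian.eq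
    have hsym : ∀ v w : Fin n → ℝ, v ⬝ᵥ (K *ᵥ w) = w ⬝ᵥ (K *ᵥ v) := fun v w => by
      rw [dotProduct_mulVec, ← mulVec_transpose, hKT, dotProduct_comm]
    have hφ't : φ' t = 1 + γ * P := by rw [hode2 t, hP_def, he_def, hd_def]
    have hE : s' t - φ' t • f' (φ t) = d - (γ * P) • f' (φ t) := by
      rw [hφ't, hd_def]; module
    have hD : s'' t - φ' t • f'' (φ t)
        = -(B *ᵥ d) - K *ᵥ e - (γ * P) • f'' (φ t) := by
      rw [hode1 t, hφ't, he_def, hd_def]; module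
    rw [hE, hD]
    simp only [sub_dotProduct, dotProduct_sub, neg_dotProduct, dotProduct_neg,
      smul_dotProduct, dotProduct_smul, mulVec_smul, mulVec_sub, smul_eq_mul]
    rw [hsym (f' (φ t)) e, hsym e d, dotProduct_comm (f'' (φ t)) d,
      dotProduct_comm (B *ᵥ d) d, dotProduct_comm (K *ᵥ e) d]
    rw [hP_def]
    ring
  · have h1 : 0 ≤ γ * P ^ 2 := mul_nonneg hγ (sq_nonneg _)
    have h2 : 0 ≤ d ⬝ᵥ (B *ᵥ d) := by
      have := hB.posSemidef.dotProduct_mulVec_nonneg d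
      simpa using this
    linarith
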